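/- For every 0 ≤ ε ≤ 1/2 and every function h : {0,1}^n → {0,1}, one has E_{(x,y)_ε}[h(x)h(y)] ≤ ( E_x[h(x)] )^{1/(1-ε)}, where the expectation E_x is over a uniform x ∈ {0,1}^n. -/

import Mathlib

/-- The weight of a pair `(x, y)` under the distribution `(x,y)_ε`. -/
noncomputable def pairWeight (ε : ℝ) {n : ℕ} (x y : Fin n → Bool) : ℝ :=
  ∏ i, if x i = y i then (1 - ε) / 2 else ε / 2

/-- `E_{(x,y)_ε}[F x y]`. -/
noncomputable def expPair (ε : ℝ) {n : ℕ}
    (F : (Fin n → Bool) → (Fin n → Bool) → ℝ) : ℝ :=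
  ∑ x : Fin n → Bool, ∑ y : Fin n → Bool, pairWeight ε x y * F x y

/-- A `{0,1}`-valued function on `{0,1}^n`, viewed as real-valued. -/
noncomputable def boolToReal {n : ℕ} (h : (Fin n → Bool) → Bool)
    (x : Fin n → Bool) : ℝ :=
  if h x then 1 else 0

lemma convexOn_sinh : ConvexOn ℝ (Set.Ici (0:ℝ)) Real.sinh := by
  refine convexOn_of_deriv2_nonneg (convex_Ici 0) Real.continuous_sinh.continuousOn
    Real.differentiable_sinh.differentiableOn ?_ ?_
  · rw [Real.deriv_sinh]; exact Real.differentiable_cosh.differentiableOn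
  · intro x hx
    have h2 : deriv^[2] Real.sinh x = Real.sinh x := by
      simp [Function.iterate_succ, Real.deriv_sinh, Real.deriv_cosh]
    rw [h2, interior_Ici] at *
    exact (Real.sinh_nonneg_iff.2 (le_of_lt hx))

lemma sinh_mul_le {q s : ℝ} (hq0 : 0 ≤ q) (hq1 : q ≤ 1) (hs : 0 ≤ s) :
    Real.sinh (q * s) ≤ q * Real.sinh s := by
  have h := convexOn_sinh.2 (Set.mem_Ici.2 hs) Set.self_mem_Ici hq0
    (by linarith : (0:ℝ) ≤ 1 - q) (by ring)
  simpa using h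

/-- Key inequality: `u^q - u^(-q) ≤ q (u - u⁻¹)` for `u ≥ 1`, `q ∈ [0,1]`. -/
lemma rpow_sub_rpow_neg_le {q u : ℝ} (hq0 : 0 ≤ q) (hq1 : q ≤ 1) (hu : 1 ≤ u) :
    u ^ q - u ^ (-q) ≤ q * (u - u⁻¹) := by
  have hu0 : (0:ℝ) < u := lt_of_lt_of_le one_pos hu
  have hlog : 0 ≤ Real.log u := Real.log_nonneg hu
  have key : u ^ q - u ^ (-q) = 2 * Real.sinh (q * Real.log u) := by
    rw [Real.sinh_eq, Real.rpow_def_of_pos hu0, Real.rpow_def_of_pos hu0, mul_neg,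
      mul_comm q (Real.log u)]
    ring
  have key2 : u - u⁻¹ = 2 * Real.sinh (Real.log u) := by
    rw [Real.sinh_eq, Real.exp_neg, Real.exp_log hu0]
    ring
  rw [key, key2]
  have := sinh_mul_le hq0 hq1 hlog
  linarith

/-- The derivative bound: for `t ∈ (0,1)`, `q = p - 1 ∈ [0,1]`:
`(1+t)^q - (1-t)^q ≤ 2 q t (1-t^2)^((q-1)/2)`. -/
lemma deriv_ineq {p t : ℝ} (hp1 : 1 ≤ p) (hp2 : p ≤ 2) (ht0 : 0 < t) (ht1 : t < 1) :
    (1+t) ^ (p-1) - (1-t) ^ (p-1) ≤ 2 * (p-1) * t * (1 - t^2) ^ (p/2 - 1) := by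
  set q : ℝ := p - 1 with hqdef
  have hq0 : 0 ≤ q := by rw [hqdef]; linarith
  have hq1 : q ≤ 1 := by rw [hqdef]; linarith
  have h1t : (0:ℝ) < 1 - t := by linarith
  have h1t' : (0:ℝ) < 1 + t := by linarith
  have hw : (0:ℝ) < 1 - t^2 := by nlinarith
  set r : ℝ := (1+t)/(1-t) with hrdef
  have hr1 : 1 ≤ r := by rw [hrdef, le_div_iff₀ h1t]; linarith
  have hr0 : (0:ℝ) < r := lt_of_lt_of_le one_pos hr1
  set u : ℝ := r ^ ((1:ℝ)/2) with hudef
  have hu1 : 1 ≤ u := Real.one_le_rpow hr1 (by norm_num)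
  have hu0 : (0:ℝ) < u := lt_of_lt_of_le one_pos hu1
  have key := rpow_sub_rpow_neg_le hq0 hq1 hu1
  have hwq : (0:ℝ) < (1 - t^2) ^ (q/2) := Real.rpow_pos_of_pos hw _
  have key2 := mul_le_mul_of_nonneg_left key hwq.le
  have claim1 : (1 - t^2) ^ (q/2) * u ^ q = (1+t) ^ q := by
    have e1 : u ^ q = r ^ (q/2) := by
      rw [hudef, ← Real.rpow_mul hr0.le]
      congr 1; ring
    rw [e1, ← Real.mul_rpow hw.le hr0.le]
    have e2 : (1 - t^2) * r = (1+t)^2 := by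
      rw [hrdef]; field_simp; ring
    rw [e2, ← Real.rpow_natCast (1+t) 2, ← Real.rpow_mul h1t'.le]
    congr 1; push_cast; ring
  have claim2 : (1 - t^2) ^ (q/2) * u ^ (-q) = (1-t) ^ q := by
    have e1 : u ^ (-q) = (r⁻¹) ^ (q/2) := by
      rw [hudef, ← Real.rpow_mul hr0.le, Real.inv_rpow hr0.le, ← Real.rpow_neg hr0.le]
      congr 1; ring
    rw [e1, ← Real.mul_rpow hw.le (by positivity : (0:ℝ) ≤ r⁻¹)]
    have e2 : (1 - t^2) * r⁻¹ = (1-t)^2 := by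
      rw [hrdef]; field_simp; ring
    rw [e2, ← Real.rpow_natCast (1-t) 2, ← Real.rpow_mul h1t.le]
    congr 1; push_cast; ring
  have claim3 : (1 - t^2) ^ (q/2) * (u - u⁻¹) = 2 * t * (1 - t^2) ^ (q/2 - 1/2) := by
    set A1 : ℝ := (1+t) ^ ((1:ℝ)/2) with hA1
    set A2 : ℝ := (1-t) ^ ((1:ℝ)/2) with hA2
    have hA1p : 0 < A1 := Real.rpow_pos_of_pos h1t' _
    have hA2p : 0 < A2 := Real.rpow_pos_of_pos h1t _
    have hA1sq : A1 * A1 = 1 + t := by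
      rw [hA1, ← Real.rpow_add h1t']; norm_num
    have hA2sq : A2 * A2 = 1 - t := by
      rw [hA2, ← Real.rpow_add h1t]; norm_num
    have hA12 : A1 * A2 = (1 - t^2) ^ ((1:ℝ)/2) := by
      rw [hA1, hA2, ← Real.mul_rpow h1t'.le h1t.le]
      congr 1; ring
    have hu_eq : u = A1 / A2 := by
      rw [hudef, hrdef, Real.div_rpow h1t'.le h1t.le, hA1, hA2]
    have hdiff : u - u⁻¹ = 2 * t / ((1 - t^2) ^ ((1:ℝ)/2)) := by
      rw [hu_eq, inv_div, ← hA12, div_sub_div _ _ hA2p.ne' hA1p.ne']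
      rw [show A1 * A1 - A2 * A2 = 2 * t by rw [hA1sq, hA2sq]; ring]
      rw [mul_comm A2 A1]
    rw [hdiff, Real.rpow_sub hw]
    field_simp
  have goal_exp : (1 - t^2) ^ (p/2 - 1 : ℝ) = (1 - t^2) ^ (q/2 - 1/2 : ℝ) := by
    congr 1; rw [hqdef]; ring
  rw [goal_exp]
  rw [mul_sub, claim1, claim2] at key2
  calc (1+t) ^ q - (1-t) ^ q ≤ (1 - t^2) ^ (q/2) * (q * (u - u⁻¹)) := key2
    _ = q * ((1 - t^2) ^ (q/2) * (u - u⁻¹)) := by ring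
    _ = 2 * q * t * (1 - t^2) ^ (q/2 - 1/2) := by rw [claim3]; ring

noncomputable def phiF (p t : ℝ) : ℝ :=
  ((1+t) ^ p + (1-t) ^ p)/2 + (p-1) * (1 - t^2) ^ (p/2)

lemma phiF_hasDeriv {p t : ℝ} (h1t' : 0 < 1 + t) (h1t : 0 < 1 - t) :
    HasDerivAt (phiF p)
      ((1 * p * (1+t) ^ (p-1) + (-1) * p * (1-t) ^ (p-1))/2
        + (p-1) * ((-2*t) * (p/2) * (1 - t^2) ^ (p/2-1))) t := by
  have hw : (0:ℝ) < 1 - t^2 := by nlinarith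
  have d1 : HasDerivAt (fun s : ℝ => (1+s) ^ p) (1 * p * (1+t) ^ (p-1)) t := by
    exact (HasDerivAt.rpow_const ((hasDerivAt_id t).const_add 1) (Or.inl h1t'.ne'))
  have d2 : HasDerivAt (fun s : ℝ => (1-s) ^ p) ((-1) * p * (1-t) ^ (p-1)) t := by
    exact (HasDerivAt.rpow_const ((hasDerivAt_id t).const_sub 1) (Or.inl h1t.ne'))
  have d3 : HasDerivAt (fun s : ℝ => (1 - s^2) ^ (p/2)) ((-2*t) * (p/2) * (1 - t^2) ^ (p/2-1)) t := by
    have dbase : HasDerivAt (fun s : ℝ => 1 - s^2) (-2*t) t := by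
      have := ((hasDerivAt_pow 2 t).const_sub 1)
      simpa using this.congr_deriv (by ring)
    exact (HasDerivAt.rpow_const dbase (Or.inl hw.ne'))
  exact ((d1.add d2).div_const 2).add (d3.const_mul (p-1))

lemma phiF_le {p : ℝ} (hp1 : 1 ≤ p) (hp2 : p ≤ 2) {t : ℝ} (ht0 : 0 ≤ t) (ht1 : t ≤ 1) :
    phiF p t ≤ p := by
  have anti : AntitoneOn (phiF p) (Set.Icc 0 1) := by
    apply antitoneOn_of_deriv_nonpos (convex_Icc 0 1)
    · -- continuity
      unfold phiF
      apply ContinuousOn.add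
      · apply ContinuousOn.div_const
        apply ContinuousOn.add
        · exact (continuousOn_const.add continuousOn_id).rpow_const
            (fun x _ => Or.inr (by linarith))
        · exact (continuousOn_const.sub continuousOn_id).rpow_const
            (fun x _ => Or.inr (by linarith))
      · apply ContinuousOn.mul continuousOn_const
        exact (continuousOn_const.sub (continuousOn_id.pow 2)).rpow_const
            (fun x _ => Or.inr (by linarith))
    · rw [interior_Icc]
      intro x hx
      obtain ⟨hx0, hx1⟩ := hx
      exact ((phiF_hasDeriv (by linarith) (by linarith)).differentiableAt).differentiableWithinAt
    · rw [interior_Icc]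
      intro x hx
      obtain ⟨hx0, hx1⟩ := hx
      rw [(phiF_hasDeriv (by linarith : (0:ℝ) < 1 + x) (by linarith : (0:ℝ) < 1 - x)).deriv]
      have key := deriv_ineq hp1 hp2 hx0 hx1
      have hq0 : 0 ≤ p - 1 := by linarith
      have hp0 : 0 < p := by linarith
      nlinarith [key, mul_le_mul_of_nonneg_left key (by linarith : (0:ℝ) ≤ p/2)]
  have h0 : phiF p 0 = p := by
    unfold phiF
    norm_num
  have hfin := anti (Set.mem_Icc.2 ⟨le_refl 0, zero_le_one⟩) (Set.mem_Icc.2 ⟨ht0, ht1⟩) ht0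
  rwa [h0] at hfin

lemma stepA_aux {p a b : ℝ} (hp1 : 1 ≤ p) (hp2 : p ≤ 2) (hb : 0 ≤ b) (hba : b ≤ a) :
    (a ^ p + b ^ p)/2 + (p-1) * (a*b) ^ (p/2) ≤ p * ((a+b)/2) ^ p := by
  have ha : 0 ≤ a := le_trans hb hba
  have hp0 : (0:ℝ) < p := by linarith
  by_cases hab0 : a + b = 0
  · have ha0 : a = 0 := by linarith
    have hb0 : b = 0 := by linarith
    rw [ha0, hb0]
    rw [Real.zero_rpow hp0.ne', mul_zero, Real.zero_rpow (by positivity : p/2 ≠ 0)]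
    norm_num
    rw [Real.zero_rpow hp0.ne', mul_zero]
  · have hm : (0:ℝ) < a + b := lt_of_le_of_ne (by linarith) (Ne.symm hab0)
    set m : ℝ := (a+b)/2 with hmdef
    set t : ℝ := (a-b)/(a+b) with htdef
    have hm2 : 0 < m := by rw [hmdef]; linarith
    have ht0 : 0 ≤ t := div_nonneg (by linarith) hm.le
    have ht1 : t ≤ 1 := by rw [htdef, div_le_one hm]; linarith
    have h1t' : (0:ℝ) ≤ 1 + t := by linarith
    have h1t : (0:ℝ) ≤ 1 - t := by linarith
    have hw : (0:ℝ) ≤ 1 - t^2 := by nlinarith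
    have ea : a = m * (1+t) := by rw [hmdef, htdef]; field_simp; ring
    have eb : b = m * (1-t) := by rw [hmdef, htdef]; field_simp; ring
    have eap : a ^ p = m ^ p * (1+t) ^ p := by rw [ea, Real.mul_rpow hm2.le h1t']
    have ebp : b ^ p = m ^ p * (1-t) ^ p := by rw [eb, Real.mul_rpow hm2.le h1t]
    have eab : a * b = m^2 * (1 - t^2) := by rw [ea, eb]; ring
    have em2 : (m^2 : ℝ) ^ (p/2 : ℝ) = m ^ p := by
      rw [← Real.rpow_natCast m 2, ← Real.rpow_mul hm2.le]
      congr 1; push_cast; ring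
    have eabp : (a*b) ^ (p/2 : ℝ) = m ^ p * (1 - t^2) ^ (p/2 : ℝ) := by
      rw [eab, Real.mul_rpow (by positivity) hw, em2]
    have key := phiF_le hp1 hp2 ht0 ht1
    unfold phiF at key
    have hmp : (0:ℝ) ≤ m ^ p := (Real.rpow_pos_of_pos hm2 p).le
    have key2 := mul_le_mul_of_nonneg_left key hmp
    rw [eap, ebp, eabp]
    nlinarith [key2]

lemma stepA {ε a b : ℝ} (hε0 : 0 ≤ ε) (hε1 : ε ≤ 1/2) (ha : 0 ≤ a) (hb : 0 ≤ b) :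
    (1-ε)/2 * (a ^ ((1:ℝ)/(1-ε)) + b ^ ((1:ℝ)/(1-ε)))
      + ε * (a*b) ^ (((1:ℝ)/(1-ε))/2)
      ≤ ((a+b)/2) ^ ((1:ℝ)/(1-ε)) := by
  have hε' : (0:ℝ) < 1 - ε := by linarith
  set p : ℝ := 1/(1-ε) with hpdef
  have hp1 : 1 ≤ p := by rw [hpdef, le_div_iff₀ hε']; linarith
  have hp2 : p ≤ 2 := by rw [hpdef, div_le_iff₀ hε']; linarith
  have e1 : (1-ε) * p = 1 := by rw [hpdef]; field_simp
  have e2 : (1-ε) * (p-1) = ε := by rw [mul_sub, e1]; ring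
  have base : (a ^ p + b ^ p)/2 + (p-1) * (a*b) ^ (p/2) ≤ p * ((a+b)/2) ^ p := by
    rcases le_total b a with hle | hle
    · exact stepA_aux hp1 hp2 hb hle
    · have := stepA_aux hp1 hp2 ha hle
      rw [mul_comm b a, add_comm (b ^ p), add_comm b a] at this
      exact this
  have h := mul_le_mul_of_nonneg_left base hε'.le
  calc (1-ε)/2 * (a ^ p + b ^ p) + ε * (a*b) ^ (p/2)
      = (1-ε) * ((a ^ p + b ^ p)/2 + (p-1) * (a*b) ^ (p/2)) := by
        linear_combination (-((a*b) ^ (p/2))) * e2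
    _ ≤ (1-ε) * (p * ((a+b)/2) ^ p) := h
    _ = ((a+b)/2) ^ p := by
        rw [show (1-ε) * (p * ((a+b)/2) ^ p) = ((1-ε)*p) * ((a+b)/2) ^ p from by ring,
          e1, one_mul]

noncomputable def Bform (ε : ℝ) {n : ℕ} (f g : (Fin n → Bool) → ℝ) : ℝ :=
  ∑ x : Fin n → Bool, ∑ y : Fin n → Bool, pairWeight ε x y * (f x * g y)

lemma pairWeight_symm (ε : ℝ) {n : ℕ} (x y : Fin n → Bool) :
    pairWeight ε x y = pairWeight ε y x := by
  unfold pairWeight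
  refine Finset.prod_congr rfl fun i _ => ?_
  by_cases h : x i = y i
  · simp [h]
  · rw [if_neg h, if_neg fun hh => h hh.symm]

lemma Bform_symm (ε : ℝ) {n : ℕ} (f g : (Fin n → Bool) → ℝ) :
    Bform ε f g = Bform ε g f := by
  unfold Bform
  rw [Finset.sum_comm]
  refine Finset.sum_congr rfl fun x _ => Finset.sum_congr rfl fun y _ => ?_
  rw [pairWeight_symm]; ring

/-- sum over cons decomposition -/
lemma sum_cons {n : ℕ} (F : (Fin (n+1) → Bool) → ℝ) :
    ∑ z : Fin (n+1) → Bool, F z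
      = ∑ a : Bool, ∑ x : Fin n → Bool, F (Fin.cons a x) := by
  rw [← Fintype.sum_equiv (Fin.consEquiv fun _ => Bool)
        (fun p => F (Fin.cons p.1 p.2)) F (fun p => rfl), Fintype.sum_prod_type]

lemma pairWeight_cons (ε : ℝ) {n : ℕ} (a b : Bool) (x y : Fin n → Bool) :
    pairWeight ε (Fin.cons a x) (Fin.cons b y)
      = (if a = b then (1 - ε) / 2 else ε / 2) * pairWeight ε x y := by
  unfold pairWeight
  rw [Fin.prod_univ_succ]
  simp

lemma Bform_succ (ε : ℝ) {n : ℕ} (f g : (Fin (n+1) → Bool) → ℝ) :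
    Bform ε f g = ∑ a : Bool, ∑ b : Bool,
      (if a = b then (1 - ε) / 2 else ε / 2) *
        Bform ε (fun x => f (Fin.cons a x)) (fun y => g (Fin.cons b y)) := by
  unfold Bform
  rw [sum_cons (F := fun z => ∑ y, pairWeight ε z y * (f z * g y))]
  refine Finset.sum_congr rfl fun a _ => ?_
  have key : ∀ x : Fin n → Bool,
      ∑ y : Fin (n+1) → Bool, pairWeight ε (Fin.cons a x) y * (f (Fin.cons a x) * g y)
        = ∑ b : Bool, ∑ y : Fin n → Bool,
            (if a = b then (1 - ε) / 2 else ε / 2) *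
              (pairWeight ε x y * (f (Fin.cons a x) * g (Fin.cons b y))) := by
    intro x
    rw [sum_cons (F := fun y => pairWeight ε (Fin.cons a x) y * (f (Fin.cons a x) * g y))]
    refine Finset.sum_congr rfl fun b _ => Finset.sum_congr rfl fun y _ => ?_
    rw [pairWeight_cons]; ring
  simp_rw [key]
  rw [Finset.sum_comm]
  refine Finset.sum_congr rfl fun b _ => ?_
  simp_rw [Finset.mul_sum]

lemma Bform_comb (ε : ℝ) {n : ℕ} (f g : (Fin n → Bool) → ℝ) (s t : ℝ) :
    Bform ε (fun x => s * f x + t * g x) (fun x => s * f x + t * g x)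
      = s^2 * Bform ε f f + s*t*Bform ε f g + s*t*Bform ε g f + t^2 * Bform ε g g := by
  unfold Bform
  simp only [Finset.mul_sum]
  rw [← Finset.sum_add_distrib, ← Finset.sum_add_distrib, ← Finset.sum_add_distrib]
  refine Finset.sum_congr rfl fun x _ => ?_
  rw [← Finset.sum_add_distrib, ← Finset.sum_add_distrib, ← Finset.sum_add_distrib]
  refine Finset.sum_congr rfl fun y _ => ?_
  ring

lemma Bform_self_nonneg {ε : ℝ} (hε0 : 0 ≤ ε) (hε1 : ε ≤ 1/2) :
    ∀ {n : ℕ} (f : (Fin n → Bool) → ℝ), 0 ≤ Bform ε f f := by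
  intro n
  induction n with
  | zero =>
    intro f
    have : Bform ε f f = f (fun _ => false) * f (fun _ => false) := by
      unfold Bform pairWeight
      simp
      exact congrArg₂ (· * ·) (congrArg f (Subsingleton.elim _ _))
        (congrArg f (Subsingleton.elim _ _))
    rw [this]; exact mul_self_nonneg _
  | succ n ih =>
    intro f
    rw [Bform_succ]
    simp only [Fintype.sum_bool, if_neg (by simp : ¬ (true = false)), if_neg (by simp : ¬ (false = true)), reduceIte]
    have h1 := ih (fun x => (1:ℝ) * f (Fin.cons false x) + 1 * f (Fin.cons true x))
    have h2 := ih (fun x => (1:ℝ) * f (Fin.cons false x) + (-1) * f (Fin.cons true x))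
    rw [Bform_comb] at h1 h2
    have hc := mul_nonneg (show (0:ℝ) ≤ 1 - 2*ε by linarith) h2
    linarith [h1, hc]

lemma Bform_cs {ε : ℝ} (hε0 : 0 ≤ ε) (hε1 : ε ≤ 1/2) {n : ℕ}
    (f g : (Fin n → Bool) → ℝ) :
    (Bform ε f g)^2 ≤ Bform ε f f * Bform ε g g := by
  have key : ∀ t : ℝ, 0 ≤ Bform ε g g * (t * t) + (2 * Bform ε f g) * t + Bform ε f f := by
    intro t
    have h := Bform_self_nonneg hε0 hε1 (fun x => (1:ℝ) * f x + t * g x)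
    rw [Bform_comb] at h
    rw [Bform_symm ε g f] at h
    nlinarith [h]
  have hd := discrim_le_zero key
  unfold discrim at hd
  nlinarith [hd]


lemma Bform_zero (ε : ℝ) (f : (Fin 0 → Bool) → ℝ) :
    Bform ε f f = f default * f default := by
  unfold Bform pairWeight
  simp
  exact congrArg₂ (· * ·) (congrArg f (Subsingleton.elim _ _))
    (congrArg f (Subsingleton.elim _ _))

lemma sum_zero' (f : (Fin 0 → Bool) → ℝ) :
    (∑ x : Fin 0 → Bool, f x) = f default := by
  simp
  exact congrArg f (Subsingleton.elim _ _)

lemma boolToReal_nonneg {n : ℕ} (h : (Fin n → Bool) → Bool) (x : Fin n → Bool) :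
    0 ≤ boolToReal h x := by
  unfold boolToReal; positivity

lemma main_ind {ε : ℝ} (hε0 : 0 ≤ ε) (hε1 : ε ≤ 1/2) :
    ∀ {n : ℕ} (h : (Fin n → Bool) → Bool),
      Bform ε (boolToReal h) (boolToReal h)
        ≤ ((∑ x : Fin n → Bool, boolToReal h x) / 2 ^ n) ^ ((1 : ℝ) / (1 - ε)) := by
  have hε' : (0:ℝ) < 1 - ε := by linarith
  have hp0 : (0:ℝ) < 1/(1-ε) := by positivity
  intro n
  induction n with
  | zero =>
    intro h
    rw [Bform_zero, sum_zero' (boolToReal h)]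
    rw [show ((2:ℝ)^(0:ℕ)) = 1 from by norm_num, div_one]
    by_cases hd : h default
    · rw [show boolToReal h default = 1 from by unfold boolToReal; rw [if_pos hd]]
      rw [Real.one_rpow]; norm_num
    · rw [show boolToReal h default = 0 from by unfold boolToReal; rw [if_neg hd]]
      rw [Real.zero_rpow hp0.ne']; norm_num
  | succ n ih =>
    intro h
    have key := Bform_succ ε (boolToReal h) (boolToReal h)
    simp only [Fintype.sum_bool, if_neg (by simp : ¬ (true = false)),
      if_neg (by simp : ¬ (false = true)), reduceIte] at key
    have idt : (fun x : Fin n → Bool => boolToReal h (Fin.cons true x))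
        = boolToReal (fun x => h (Fin.cons true x)) := rfl
    have idf : (fun x : Fin n → Bool => boolToReal h (Fin.cons false x))
        = boolToReal (fun x => h (Fin.cons false x)) := rfl
    rw [idt, idf] at key
    set ht : (Fin n → Bool) → Bool := fun x => h (Fin.cons true x) with hhtdef
    set hf : (Fin n → Bool) → Bool := fun x => h (Fin.cons false x) with hhfdef
    set St : ℝ := ∑ x : Fin n → Bool, boolToReal ht x with hStdef
    set Sf : ℝ := ∑ x : Fin n → Bool, boolToReal hf x with hSfdef
    set At : ℝ := St / 2^n with hAtdef
    set Af : ℝ := Sf / 2^n with hAfdef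
    have hAt0 : 0 ≤ At := by
      rw [hAtdef, hStdef]
      exact div_nonneg (Finset.sum_nonneg fun x _ => boolToReal_nonneg ht x) (by positivity)
    have hAf0 : 0 ≤ Af := by
      rw [hAfdef, hSfdef]
      exact div_nonneg (Finset.sum_nonneg fun x _ => boolToReal_nonneg hf x) (by positivity)
    have iht := ih ht
    have ihf := ih hf
    have hBt0 : 0 ≤ Bform ε (boolToReal ht) (boolToReal ht) := Bform_self_nonneg hε0 hε1 _
    have hBf0 : 0 ≤ Bform ε (boolToReal hf) (boolToReal hf) := Bform_self_nonneg hε0 hε1 _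
    have hrt0 : (0:ℝ) ≤ At ^ ((1:ℝ)/(1-ε)) := Real.rpow_nonneg hAt0 _
    have hcs := Bform_cs hε0 hε1 (boolToReal ht) (boolToReal hf)
    have hmul : Bform ε (boolToReal ht) (boolToReal ht) * Bform ε (boolToReal hf) (boolToReal hf)
        ≤ At ^ ((1:ℝ)/(1-ε)) * Af ^ ((1:ℝ)/(1-ε)) :=
      mul_le_mul iht ihf hBf0 hrt0
    set X : ℝ := (At * Af) ^ (((1:ℝ)/(1-ε))/2) with hXdef
    have hX0 : 0 ≤ X := Real.rpow_nonneg (mul_nonneg hAt0 hAf0) _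
    have hX2 : X ^ 2 = At ^ ((1:ℝ)/(1-ε)) * Af ^ ((1:ℝ)/(1-ε)) := by
      rw [hXdef, ← Real.rpow_natCast ((At * Af) ^ (((1:ℝ)/(1-ε))/2)) 2,
        ← Real.rpow_mul (mul_nonneg hAt0 hAf0),
        show ((1:ℝ)/(1-ε))/2 * ((2:ℕ):ℝ) = (1:ℝ)/(1-ε) from by push_cast; ring]
      exact Real.mul_rpow hAt0 hAf0
    have h2 : (Bform ε (boolToReal ht) (boolToReal hf)) ^ 2 ≤ X ^ 2 := by
      rw [hX2]
      calc (Bform ε (boolToReal ht) (boolToReal hf)) ^ 2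
          ≤ Bform ε (boolToReal ht) (boolToReal ht) * Bform ε (boolToReal hf) (boolToReal hf) :=
            hcs
        _ ≤ _ := hmul
    have habs : |Bform ε (boolToReal ht) (boolToReal hf)| ≤ |X| := by
      rw [← Real.sqrt_sq_eq_abs, ← Real.sqrt_sq_eq_abs]
      exact Real.sqrt_le_sqrt h2
    have hBX : Bform ε (boolToReal ht) (boolToReal hf) ≤ X :=
      le_trans (le_abs_self _) (by rwa [abs_of_nonneg hX0] at habs)
    have hsym : Bform ε (boolToReal hf) (boolToReal ht)
        = Bform ε (boolToReal ht) (boolToReal hf) := Bform_symm ε _ _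
    have hsum : (∑ x : Fin (n+1) → Bool, boolToReal h x) = St + Sf := by
      rw [sum_cons (F := boolToReal h), Fintype.sum_bool, hStdef, hSfdef]
      exact congrArg₂ (· + ·) (Finset.sum_congr rfl fun x _ => rfl)
        (Finset.sum_congr rfl fun x _ => rfl)
    have hhalf : (St + Sf) / 2 ^ (n+1) = (At + Af)/2 := by
      rw [hAtdef, hAfdef, pow_succ]
      field_simp
      try ring
    have final := stepA hε0 hε1 hAt0 hAf0
    have m1 := mul_le_mul_of_nonneg_left iht (by linarith : (0:ℝ) ≤ (1-ε)/2)
    have m2 := mul_le_mul_of_nonneg_left ihf (by linarith : (0:ℝ) ≤ (1-ε)/2)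
    have m3 := mul_le_mul_of_nonneg_left hBX (by linarith : (0:ℝ) ≤ ε/2)
    rw [hsum, hhalf]
    rw [key, hsym]
    linarith [final, m1, m2, m3]

theorem stmt4 {n : ℕ} (ε : ℝ) (hε0 : 0 ≤ ε) (hε1 : ε ≤ 1 / 2)
    (h : (Fin n → Bool) → Bool) :
    expPair ε (fun x y => boolToReal h x * boolToReal h y) ≤
      ((∑ x : Fin n → Bool, boolToReal h x) / 2 ^ n) ^ ((1 : ℝ) / (1 - ε)) := by
  have e : expPair ε (fun x y => boolToReal h x * boolToReal h y)
      = Bform ε (boolToReal h) (boolToReal h) := rfl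
  rw [e]
  exact main_ind hε0 (by linarith) h
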